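/- arXiv:2210.03406 — 2 statements merged into one kernel-verified Lean document; each statement's English description precedes it below -/
import Mathlib

section
/- Let L be a field of characteristic p containing an element f ≠ 0, and let M = L[t]/(t^p − f^{p−1}t − a) for some a ∈ L such that the polynomial is irreducible. Then the map t ↦ t + f extends to an L-automorphism of M of order p, generating a cyclic Galois group of M/L of order p. -/
open Polynomial

/-- Let `L` be a field of characteristic `p` containing `f ≠ 0`, and let
`M = L[t]/(t^p − f^{p−1}t − a)` with the polynomial irreducible.  Then `t ↦ t + f`
extends to an `L`-automorphism `σ` of `M` of order exactly `p`, and `M/L` is Galois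
with cyclic Galois group generated by `σ`. -/
theorem stmt12 (p : ℕ) (hp : p.Prime) (L : Type*) [Field L] [CharP L p]
    (f : L) (hf : f ≠ 0) (a : L)
    (hirr : Fact (Irreducible (X ^ p - C (f ^ (p - 1)) * X - C a : L[X]))) :
    IsGalois L (AdjoinRoot (X ^ p - C (f ^ (p - 1)) * X - C a : L[X])) ∧
    ∃ σ : AdjoinRoot (X ^ p - C (f ^ (p - 1)) * X - C a : L[X]) ≃ₐ[L]
        AdjoinRoot (X ^ p - C (f ^ (p - 1)) * X - C a : L[X]),
      σ (AdjoinRoot.root _) = AdjoinRoot.root _ + algebraMap L _ f ∧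
      orderOf σ = p ∧
      ∀ τ : AdjoinRoot (X ^ p - C (f ^ (p - 1)) * X - C a : L[X]) ≃ₐ[L]
          AdjoinRoot (X ^ p - C (f ^ (p - 1)) * X - C a : L[X]),
        τ ∈ Subgroup.zpowers σ := by
  haveI : Fact p.Prime := ⟨hp⟩
  set P : L[X] := X ^ p - C (f ^ (p - 1)) * X - C a with hPdef
  set M := AdjoinRoot P with hM
  have hp0 : p ≠ 0 := hp.ne_zero
  have hp1 : 0 < p := hp.pos
  have hPalt : P = X ^ p - (C (f ^ (p - 1)) * X + C a) := by rw [hPdef]; ring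
  have hdeglt : (C (f ^ (p - 1)) * X + C a).natDegree < p :=
    lt_of_le_of_lt (natDegree_linear_le) hp.one_lt
  have hndeg : P.natDegree = p := by
    rw [hPalt, natDegree_sub_eq_left_of_natDegree_lt (by rwa [natDegree_X_pow]),
      natDegree_X_pow]
  have hmonic : P.Monic := by
    rw [hPalt]
    exact monic_X_pow_sub (lt_of_le_of_lt degree_le_natDegree (by exact_mod_cast hdeglt))
  have hPne : P ≠ 0 := hmonic.ne_zero
  haveI : CharP M p := charP_of_injective_algebraMap (algebraMap L M).injective p
  haveI : FiniteDimensional L M :=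
    Module.Finite.of_basis (AdjoinRoot.powerBasis hPne).basis
  have hfinrank : Module.finrank L M = p := by
    have := (AdjoinRoot.powerBasis hPne).finrank
    rwa [AdjoinRoot.powerBasis_dim, hndeg] at this
  have hev : ∀ x : M, aeval x P = x ^ p - algebraMap L M (f ^ (p - 1)) * x - algebraMap L M a := by
    intro x
    simp [hPdef, map_sub, map_mul, map_pow]
  have hroot : (aeval (AdjoinRoot.root P) P : M) = 0 := by
    rw [AdjoinRoot.aeval_eq, AdjoinRoot.mk_self]
  have hr : (AdjoinRoot.root P) ^ p - algebraMap L M (f ^ (p - 1)) * AdjoinRoot.root P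
      - algebraMap L M a = 0 := by rw [← hev]; exact hroot
  have e1 : (algebraMap L M f) ^ p = algebraMap L M (f ^ (p - 1)) * algebraMap L M f := by
    have hpp : f ^ (p - 1) * f = f ^ p := by rw [← pow_succ]; congr 1; omega
    rw [← map_pow, ← map_mul, hpp]
  have h2 : aeval (AdjoinRoot.root P + algebraMap L M f) P = 0 := by
    rw [hev, add_pow_char]
    linear_combination hr + e1
  let φ : M →ₐ[L] M := AdjoinRoot.liftAlgHom P (Algebra.ofId L M) (AdjoinRoot.root P + algebraMap L M f) h2
  have hφroot : φ (AdjoinRoot.root P) = AdjoinRoot.root P + algebraMap L M f := by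
    simp only [φ]
    exact AdjoinRoot.liftAlgHom_root _ _ _ h2
  let σ : M ≃ₐ[L] M := AlgEquiv.ofBijective φ (Algebra.IsAlgebraic.algHom_bijective φ)
  have hσroot : σ (AdjoinRoot.root P) = AdjoinRoot.root P + algebraMap L M f := hφroot
  have hpowroot : ∀ n : ℕ, (σ ^ n) (AdjoinRoot.root P)
      = AdjoinRoot.root P + n • algebraMap L M f := by
    intro n
    induction n with
    | zero => simp
    | succ n ih =>
      rw [pow_succ, AlgEquiv.mul_apply, hσroot, map_add, ih, AlgEquiv.commutes, succ_nsmul]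
      ring
  have hσp : σ ^ p = 1 := by
    have : (σ ^ p) (AdjoinRoot.root P) = AdjoinRoot.root P := by
      rw [hpowroot, nsmul_eq_mul, CharP.cast_eq_zero M p, zero_mul, add_zero]
    apply AlgEquiv.coe_algHom_injective
    apply AdjoinRoot.algHom_ext
    simpa using this
  have hσne : σ ≠ 1 := by
    intro h
    have : σ (AdjoinRoot.root P) = AdjoinRoot.root P := by rw [h]; rfl
    rw [hσroot, add_eq_left] at this
    exact hf ((_root_.map_eq_zero _).mp this)
  have horder : orderOf σ = p := orderOf_eq_prime hσp hσne
  -- upper bound on card of automorphism group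
  classical
  have hcard_le : Nat.card (M ≃ₐ[L] M) ≤ p := by
    have hinj : Function.Injective
        (fun τ : M ≃ₐ[L] M => (⟨τ (AdjoinRoot.root P), by
          rw [mem_rootSet]
          refine ⟨hPne, ?_⟩
          rw [aeval_algHom_apply, hroot, map_zero]⟩ : P.rootSet M)) := by
      intro τ₁ τ₂ h
      have := Subtype.ext_iff.mp h
      apply AlgEquiv.coe_algHom_injective
      exact AdjoinRoot.algHom_ext this
    calc Nat.card (M ≃ₐ[L] M) ≤ Nat.card (P.rootSet M) := Nat.card_le_card_of_injective _ hinj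
      _ ≤ P.natDegree := by
          rw [Nat.card_eq_fintype_card]
          calc Fintype.card (P.rootSet M) = (P.aroots M).toFinset.card := by
                simp [rootSet_def]
            _ ≤ Multiset.card (P.aroots M) := Multiset.toFinset_card_le _
            _ ≤ (P.map (algebraMap L M)).natDegree := card_roots' _
            _ = P.natDegree := natDegree_map _
      _ = p := hndeg
  have hcard_ge : p ≤ Nat.card (M ≃ₐ[L] M) := by
    rw [← horder, ← Nat.card_zpowers]
    exact Subgroup.card_le_card_group _
  have hcard : Nat.card (M ≃ₐ[L] M) = p := le_antisymm hcard_le hcard_ge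
  have hgal : IsGalois L M := by
    apply IsGalois.of_card_aut_eq_finrank
    rw [hcard, hfinrank]
  have htop : Subgroup.zpowers σ = ⊤ := by
    apply Subgroup.eq_top_of_card_eq
    rw [Nat.card_zpowers, horder, hcard]
  refine ⟨hgal, σ, hσroot, horder, fun τ => ?_⟩
  rw [htop]
  trivial
end

section
/- Let A ⊆ B be an extension of integral domains with B integral over A, let K = Frac(A), L = Frac(B), and suppose [L : K] = n. Let I ⊆ A be a maximal ideal and suppose B ⊗_A K → L is an isomorphism and B ⊗_A (A/I) is a field of degree n over A/I. If A is a DVR with maximal ideal I, then B is a DVR (in particular B is normal). -/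
open TensorProduct

/-- Let `A` be a DVR with fraction field `K` and residue field `κ`, and let `B` be a
finite `A`-algebra which is a domain, such that `K ⊗_A B` is a field of `K`-dimension
`n` and `κ ⊗_A B` is a field of `κ`-dimension `n`.  Then `B` is a discrete valuation
ring; in particular `B` is integrally closed (normal). -/
theorem stmt14 (A : Type*) [CommRing A] [IsDomain A] [IsDiscreteValuationRing A]
    (B : Type*) [CommRing B] [IsDomain B] [Algebra A B] [Module.Finite A B]
    (hinj : Function.Injective (algebraMap A B))
    (n : ℕ) (hn : 0 < n)
    (h1 : IsField (FractionRing A ⊗[A] B))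
    (h2 : Module.finrank (FractionRing A) (FractionRing A ⊗[A] B) = n)
    (h3 : IsField (IsLocalRing.ResidueField A ⊗[A] B))
    (h4 : Module.finrank (IsLocalRing.ResidueField A) (IsLocalRing.ResidueField A ⊗[A] B) = n) :
    IsDiscreteValuationRing B ∧ IsIntegrallyClosed B := by
  classical
  set m : Ideal A := IsLocalRing.maximalIdeal A with hm
  haveI : IsNoetherianRing B := Algebra.FiniteType.isNoetherianRing A B
  haveI : Algebra.IsIntegral A B := Algebra.IsIntegral.of_finite A B
  letI : Field (IsLocalRing.ResidueField A ⊗[A] B) := h3.toField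
  -- the ring hom φ : B → κ ⊗ B
  set φ : B →+* IsLocalRing.ResidueField A ⊗[A] B :=
    (Algebra.TensorProduct.includeRight (R := A) (A := IsLocalRing.ResidueField A)
      (B := B)).toRingHom with hφ
  have hφsurj : Function.Surjective φ := by
    intro x
    induction x using TensorProduct.induction_on with
    | zero => exact ⟨0, map_zero _⟩
    | tmul q b =>
      obtain ⟨a, rfl⟩ := Ideal.Quotient.mk_surjective q
      refine ⟨a • b, ?_⟩
      show (1 : IsLocalRing.ResidueField A) ⊗ₜ[A] (a • b) = _
      rw [TensorProduct.tmul_smul, TensorProduct.smul_tmul']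
      congr 1
      show (a : A) • (Ideal.Quotient.mk m 1) = _
      rw [Algebra.smul_def, map_one, mul_one]
      rfl
    | add x y hx hy =>
      obtain ⟨b, rfl⟩ := hx
      obtain ⟨c, rfl⟩ := hy
      exact ⟨b + c, map_add _ _ _⟩
  -- kernel of φ is m • B = map m
  have hker : RingHom.ker φ = Ideal.map (algebraMap A B) m := by
    have e := quotTensorEquivQuotSMul B m
    ext b
    have hb : φ b = (Ideal.Quotient.mk m 1) ⊗ₜ[A] b := rfl
    have : φ b = 0 ↔ b ∈ m • (⊤ : Submodule A B) := by
      rw [hb]; refine Iff.trans (LinearEquiv.map_eq_zero_iff (quotTensorEquivQuotSMul B m) (x := (Ideal.Quotient.mk m 1) ⊗ₜ[A] b)).symm ?_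
      rw [quotTensorEquivQuotSMul_mk_tmul, one_smul]
      exact Submodule.Quotient.mk_eq_zero _
    rw [RingHom.mem_ker, this, Ideal.smul_top_eq_map]
    rfl
  -- map m is maximal
  have hmax : (Ideal.map (algebraMap A B) m).IsMaximal := by
    rw [← hker]
    exact RingHom.ker_isMaximal_of_surjective φ hφsurj
  -- B is local
  have huniq : ∀ M : Ideal B, M.IsMaximal → M = Ideal.map (algebraMap A B) m := by
    intro M hM
    haveI := hM
    have hc : (M.comap (algebraMap A B)).IsMaximal :=
      Ideal.isMaximal_comap_of_isIntegral_of_isMaximal M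
    have hcm : M.comap (algebraMap A B) = m := IsLocalRing.eq_maximalIdeal hc
    have hle : Ideal.map (algebraMap A B) m ≤ M := by
      rw [← hcm]; exact Ideal.map_comap_le
    exact (hmax.eq_of_le hM.ne_top hle).symm
  haveI : IsLocalRing B :=
    IsLocalRing.of_unique_max_ideal ⟨Ideal.map (algebraMap A B) m, hmax, huniq⟩
  have hmaxeq : IsLocalRing.maximalIdeal B = Ideal.map (algebraMap A B) m :=
    (IsLocalRing.eq_maximalIdeal hmax).symm
  -- maximal ideal is principal
  obtain ⟨ϖ, hϖ⟩ := IsDiscreteValuationRing.exists_irreducible A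
  have hms : m = Ideal.span {ϖ} :=
    (IsDiscreteValuationRing.irreducible_iff_uniformizer ϖ).mp hϖ
  have hprin : (IsLocalRing.maximalIdeal B).IsPrincipal := by
    rw [hmaxeq, hms, Ideal.map_span]
    exact ⟨⟨algebraMap A B ϖ, by simp⟩⟩
  -- B is not a field
  have hnf : ¬ IsField B := by
    intro hf
    have hne : (IsLocalRing.maximalIdeal B) ≠ ⊥ := by
      rw [hmaxeq, hms, Ideal.map_span, Set.image_singleton, Ne,
        Ideal.span_singleton_eq_bot]
      intro h0
      exact hϖ.ne_zero (hinj (by rw [h0, map_zero]))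
    exact hne (IsLocalRing.isField_iff_maximalIdeal_eq.mp hf)
  have hdvr : IsDiscreteValuationRing B :=
    ((IsDiscreteValuationRing.TFAE B hnf).out 0 4).mpr hprin
  haveI := hdvr
  exact ⟨hdvr, inferInstance⟩
end
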